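/- Let N ≥ 2. Define N-periodic sequences (α̃_n), (β̃_n) by α̃_{kN+i} = α_i/√2 if i ∈ {0, N−1} and α̃_{kN+i} = α_i otherwise, and β̃_{kN+i} = β_0/2 if i = 0 and β̃_{kN+i} = β_i otherwise (k ∈ ℤ, i ∈ {0,…,N−1}). Let 𝔅̃_j(x) be the 2×2 matrix with first row (0, 1) and second row (−α̃_{j−1}/α̃_j, (x − β̃_j)/α̃_j), and set 𝔛̃_n(x) = 𝔅̃_{n+N−1}(x) ⋯ 𝔅̃_n(x). Then for all x: 𝒳_1(x) = −diag(1/√2, 1) · 𝔛̃_1(x) · diag(√2, 1); 𝒳_j(x) = −𝔛̃_j(x) for j ∈ {2, 3, …, N−1}; and 𝒳_N(x) = −diag(√2, 1) · 𝔛̃_0(x) · diag(1/√2, 1). -/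
import Mathlib


open Filter Topology

noncomputable section

abbrev Mat2 := Matrix (Fin 2) (Fin 2) ℝ

/-- The transfer matrix `𝔅_j(x)` built from (N-periodic) sequences `(α_n)`, `(β_n)`. -/
def frakB (α β : ℤ → ℝ) (j : ℤ) (x : ℝ) : Mat2 :=
  !![0, 1; -(α (j - 1)) / α j, (x - β j) / α j]

/-- Product in decreasing index order with integer starting point:
`prodDZ C n0 len = C (n0+len-1) ⋯ C n0`. -/
def prodDZ (C : ℤ → Mat2) (n0 : ℤ) : ℕ → Mat2
  | 0 => 1
  | (len + 1) => C (n0 + len) * prodDZ C n0 len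

/-- The matrix `𝒞(x)`. -/
def Cmat (α β : ℤ → ℝ) (N : ℕ) (x : ℝ) : Mat2 :=
  !![0, -1; α ((N : ℤ) - 1) / α 0, -(2 * x - β 0) / α 0]

/-- `𝒳_i(x) = (∏_{j=1}^{i−1} 𝔅_j(x)) · 𝒞(x) · (∏_{j=i}^{N−1} 𝔅_j(x))`. -/
def calX (α β : ℤ → ℝ) (N i : ℕ) (x : ℝ) : Mat2 :=
  prodDZ (fun j => frakB α β j x) 1 (i - 1) * Cmat α β N x *
    prodDZ (fun j => frakB α β j x) (i : ℤ) (N - i)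

/-- The modified sequence `α̃`: at indices congruent to `0` or `N−1` mod `N`, divide by `√2`. -/
def talpha (α : ℤ → ℝ) (N : ℕ) (n : ℤ) : ℝ :=
  if n % (N : ℤ) = 0 ∨ n % (N : ℤ) = (N : ℤ) - 1 then α n / Real.sqrt 2 else α n

/-- The modified sequence `β̃`: at indices congruent to `0` mod `N`, divide by `2`. -/
def tbeta (β : ℤ → ℝ) (N : ℕ) (n : ℤ) : ℝ :=
  if n % (N : ℤ) = 0 then β n / 2 else β n

/-- `𝔛̃_n(x) = 𝔅̃_{n+N−1}(x) ⋯ 𝔅̃_n(x)` built from `α̃`, `β̃`. -/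
def tfrakX (α β : ℤ → ℝ) (N : ℕ) (n : ℤ) (x : ℝ) : Mat2 :=
  prodDZ (fun j => frakB (talpha α N) (tbeta β N) j x) n N

namespace BlendAux

def D1 : Mat2 := !![1 / Real.sqrt 2, 0; 0, 1]
def D2 : Mat2 := !![Real.sqrt 2, 0; 0, 1]
def E1 : Mat2 := !![1, 0; 0, 1 / Real.sqrt 2]
def E2 : Mat2 := !![1, 0; 0, Real.sqrt 2]

lemma hu : (0:ℝ) < Real.sqrt 2 := by positivity
lemma hu2 : Real.sqrt 2 * Real.sqrt 2 = 2 := Real.mul_self_sqrt (by norm_num)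

lemma add_N_emod (a n : ℤ) : (a + n) % n = a % n := by
  rw [show a + n = a + n * 1 by ring, Int.add_mul_emod_self_left]

lemma prodDZ_add (C : ℤ → Mat2) (n0 : ℤ) (l1 l2 : ℕ) :
    prodDZ C n0 (l1 + l2) = prodDZ C (n0 + l1) l2 * prodDZ C n0 l1 := by
  induction l2 with
  | zero => simp [prodDZ]
  | succ l2 ih =>
    show prodDZ C n0 (l1 + l2 + 1) = _
    rw [prodDZ, prodDZ, ih, ← Matrix.mul_assoc]
    congr 2
    push_cast; ring

lemma prodDZ_congr {C D : ℤ → Mat2} {n0 : ℤ} {len : ℕ}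
    (h : ∀ k : ℕ, k < len → C (n0 + k) = D (n0 + k)) :
    prodDZ C n0 len = prodDZ D n0 len := by
  induction len with
  | zero => rfl
  | succ len ih =>
    rw [prodDZ, prodDZ, h len (by omega), ih (fun k hk => h k (by omega))]

lemma prodDZ_shift {C : ℤ → Mat2} {N : ℕ} (hper : ∀ n : ℤ, C (n + N) = C n)
    (n0 : ℤ) (len : ℕ) : prodDZ C (n0 + N) len = prodDZ C n0 len := by
  induction len with
  | zero => rfl
  | succ len ih =>
    rw [prodDZ, prodDZ, ih]
    congr 1
    rw [show n0 + N + len = (n0 + len) + N by ring, hper]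

lemma prodDZ_one (C : ℤ → Mat2) (n0 : ℤ) : prodDZ C n0 1 = C n0 := by
  simp [prodDZ]

/- sandwich identities -/

lemma D1D2 : D1 * D2 = 1 := by
  have h := hu.ne'
  simp only [D1, D2]
  ext i j
  fin_cases i <;> fin_cases j <;>
    simp [Matrix.mul_apply, Fin.sum_univ_two, Matrix.vecMul, Matrix.vecHead, Matrix.vecTail,
      dotProduct, Matrix.one_apply] <;> field_simp

lemma D2D1 : D2 * D1 = 1 := by
  have h := hu.ne'
  simp only [D1, D2]
  ext i j
  fin_cases i <;> fin_cases j <;>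
    simp [Matrix.mul_apply, Fin.sum_univ_two, Matrix.vecMul, Matrix.vecHead, Matrix.vecTail,
      dotProduct, Matrix.one_apply] <;> field_simp

lemma sand2 (M W : Mat2) : D1 * (E1 * (M * (D2 * (E2 * W)))) = M * W := by
  have h := hu.ne'
  simp only [D1, D2, E1, E2]
  ext i j
  fin_cases i <;> fin_cases j <;>
    simp [Matrix.mul_apply, Fin.sum_univ_two, Matrix.vecMul, Matrix.vecHead, Matrix.vecTail,
      dotProduct] <;> field_simp <;> ring_nf <;> simp [Real.sq_sqrt] <;> try ring

lemma sand3 (P W : Mat2) : D2 * (E2 * (P * (D1 * (E1 * W)))) = P * W := by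
  have h := hu.ne'
  simp only [D1, D2, E1, E2]
  ext i j
  fin_cases i <;> fin_cases j <;>
    simp [Matrix.mul_apply, Fin.sum_univ_two, Matrix.vecMul, Matrix.vecHead, Matrix.vecTail,
      dotProduct] <;> field_simp <;> ring_nf <;> simp [Real.sq_sqrt] <;> try ring

section Main

variable {N : ℕ} {α β : ℤ → ℝ} {x : ℝ}

lemma talpha_div {k : ℤ} (h : k % (N : ℤ) = 0 ∨ k % (N : ℤ) = (N : ℤ) - 1) :
    talpha α N k = α k / Real.sqrt 2 := by unfold talpha; exact if_pos h

lemma talpha_id {k : ℤ} (h : ¬(k % (N : ℤ) = 0 ∨ k % (N : ℤ) = (N : ℤ) - 1)) :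
    talpha α N k = α k := by unfold talpha; exact if_neg h

lemma tbeta_div {k : ℤ} (h : k % (N : ℤ) = 0) : tbeta β N k = β k / 2 := by
  unfold tbeta; exact if_pos h

lemma tbeta_id {k : ℤ} (h : k % (N : ℤ) ≠ 0) : tbeta β N k = β k := by
  unfold tbeta; exact if_neg h

lemma B_per (hαper : ∀ n : ℤ, α (n + N) = α n) (hβper : ∀ n : ℤ, β (n + N) = β n) :
    ∀ j : ℤ, frakB α β (j + N) x = frakB α β j x := by
  intro j
  simp only [frakB]
  rw [show j + (N:ℤ) - 1 = (j - 1) + N by ring, hαper, hαper, hβper]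

lemma tB_generic {k : ℤ} (h2 : 2 ≤ k % (N : ℤ)) (h3 : k % (N : ℤ) ≤ (N : ℤ) - 2) :
    frakB (talpha α N) (tbeta β N) k x = frakB α β k x := by
  have hN : (0:ℤ) < N := by omega
  have hlt : k % (N:ℤ) < N := Int.emod_lt_of_pos _ hN
  have hk : (k - 1) % (N:ℤ) = k % N - 1 := by
    conv_lhs => rw [show k - 1 = (k % (N:ℤ) - 1) + (N:ℤ) * (k / N) by
      have := Int.mul_ediv_add_emod k N; linarith]
    rw [Int.add_mul_emod_self_left]
    exact Int.emod_eq_of_lt (by omega) (by omega)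
  simp only [frakB]
  rw [talpha_id (k := k) (by omega), talpha_id (k := k - 1) (by rw [hk]; omega),
    tbeta_id (k := k) (by omega)]

lemma run_generic {n0 : ℤ} {len : ℕ}
    (h : ∀ k : ℕ, k < len → 2 ≤ (n0 + k) % (N:ℤ) ∧ (n0 + k) % (N:ℤ) ≤ (N : ℤ) - 2) :
    prodDZ (fun j => frakB (talpha α N) (tbeta β N) j x) n0 len
      = prodDZ (fun j => frakB α β j x) n0 len :=
  prodDZ_congr (fun k hk => tB_generic (h k hk).1 (h k hk).2)

lemma alpha_shift (hαper : ∀ n : ℤ, α (n + N) = α n) : α ((N:ℤ) - 1) = α (-1) := by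
  rw [show ((N:ℤ) - 1) = -1 + N by ring, hαper]

lemma alpha_N (hαper : ∀ n : ℤ, α (n + N) = α n) : α (N:ℤ) = α 0 := by
  have := hαper 0; rwa [zero_add] at this

lemma beta_N (hβper : ∀ n : ℤ, β (n + N) = β n) : β (N:ℤ) = β 0 := by
  have := hβper 0; rwa [zero_add] at this

lemma alpha_N1 (hαper : ∀ n : ℤ, α (n + N) = α n) : α ((N:ℤ) + 1) = α 1 := by
  rw [show ((N:ℤ) + 1) = 1 + N by ring, hαper]

/-- `B̃_0 = E1 ⬝ (-𝒞) ⬝ D2`. -/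
lemma tB_zero (hN : 2 ≤ N) (hα : ∀ n, 0 < α n) (hαper : ∀ n : ℤ, α (n + N) = α n) :
    frakB (talpha α N) (tbeta β N) 0 x = E1 * (-Cmat α β N x) * D2 := by
  have hm1 : (-1:ℤ) % (N:ℤ) = (N:ℤ) - 1 := by
    rw [show (-1:ℤ) = ((N:ℤ) - 1) + (N:ℤ) * (-1) by ring, Int.add_mul_emod_self_left]
    exact Int.emod_eq_of_lt (by omega) (by omega)
  have e1 : talpha α N (0 - 1) = α ((N:ℤ) - 1) / Real.sqrt 2 := by
    rw [show (0:ℤ) - 1 = -1 by ring, talpha_div (Or.inr hm1), alpha_shift hαper]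
  have e2 : talpha α N 0 = α 0 / Real.sqrt 2 := talpha_div (Or.inl (Int.zero_emod _))
  have e3 : tbeta β N 0 = β 0 / 2 := tbeta_div (Int.zero_emod _)
  have ha := (hα 0).ne'
  have haN := (hα ((N:ℤ) - 1)).ne'
  have h := hu.ne'
  simp only [frakB, Cmat, E1, D2]
  rw [e1, e2, e3]
  ext i j
  fin_cases i <;> fin_cases j <;>
    simp [Matrix.mul_apply, Fin.sum_univ_two, Matrix.vecMul, Matrix.vecHead, Matrix.vecTail,
      dotProduct] <;> field_simp <;> ring_nf <;> simp [Real.sq_sqrt] <;> try ring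

/-- `B̃_N = E1 ⬝ (-𝒞) ⬝ D2`. -/
lemma tB_N (hN : 2 ≤ N) (hα : ∀ n, 0 < α n) (hαper : ∀ n : ℤ, α (n + N) = α n)
    (hβper : ∀ n : ℤ, β (n + N) = β n) :
    frakB (talpha α N) (tbeta β N) (N:ℤ) x = E1 * (-Cmat α β N x) * D2 := by
  have hN1 : ((N:ℤ) - 1) % (N:ℤ) = (N:ℤ) - 1 := Int.emod_eq_of_lt (by omega) (by omega)
  have e1 : talpha α N ((N:ℤ) - 1) = α ((N:ℤ) - 1) / Real.sqrt 2 := talpha_div (Or.inr hN1)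
  have e2 : talpha α N (N:ℤ) = α 0 / Real.sqrt 2 := by
    rw [talpha_div (Or.inl (Int.emod_self)), alpha_N hαper]
  have e3 : tbeta β N (N:ℤ) = β 0 / 2 := by
    rw [tbeta_div (Int.emod_self), beta_N hβper]
  have ha := (hα 0).ne'
  have haN := (hα ((N:ℤ) - 1)).ne'
  have h := hu.ne'
  simp only [frakB, Cmat, E1, D2]
  rw [e1, e2, e3]
  ext i j
  fin_cases i <;> fin_cases j <;>
    simp [Matrix.mul_apply, Fin.sum_univ_two, Matrix.vecMul, Matrix.vecHead, Matrix.vecTail,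
      dotProduct] <;> field_simp <;> ring_nf <;> simp [Real.sq_sqrt] <;> try ring

/-- `B̃_{N+1} = B_1 ⬝ D1` (needs `N ≥ 3`). -/
lemma tB_N1 (hN : 3 ≤ N) (hα : ∀ n, 0 < α n) (hαper : ∀ n : ℤ, α (n + N) = α n)
    (hβper : ∀ n : ℤ, β (n + N) = β n) :
    frakB (talpha α N) (tbeta β N) ((N:ℤ) + 1) x = frakB α β 1 x * D1 := by
  have hmod : ((N:ℤ) + 1) % (N:ℤ) = 1 := by
    rw [show (N:ℤ) + 1 = 1 + N by ring, add_N_emod]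
    exact Int.emod_eq_of_lt (by omega) (by omega)
  have e1 : talpha α N ((N:ℤ) + 1 - 1) = α 0 / Real.sqrt 2 := by
    rw [show (N:ℤ) + 1 - 1 = (N:ℤ) by ring, talpha_div (Or.inl (Int.emod_self)),
      alpha_N hαper]
  have e2 : talpha α N ((N:ℤ) + 1) = α 1 := by
    rw [talpha_id (by rw [hmod]; omega), alpha_N1 hαper]
  have e3 : tbeta β N ((N:ℤ) + 1) = β 1 := by
    rw [tbeta_id (by rw [hmod]; omega), show ((N:ℤ) + 1) = 1 + N by ring, hβper]
  have ha := (hα 1).ne'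
  have h := hu.ne'
  simp only [frakB, D1]
  rw [e1, e2, e3, show (1:ℤ) - 1 = 0 by ring]
  ext i j
  fin_cases i <;> fin_cases j <;>
    simp [Matrix.mul_apply, Fin.sum_univ_two, Matrix.vecMul, Matrix.vecHead, Matrix.vecTail,
      dotProduct] <;> field_simp <;> ring_nf <;> simp [Real.sq_sqrt] <;> try ring

/-- `B̃_1 = B_1 ⬝ D1` (needs `N ≥ 3`). -/
lemma tB_one (hN : 3 ≤ N) (hα : ∀ n, 0 < α n) :
    frakB (talpha α N) (tbeta β N) 1 x = frakB α β 1 x * D1 := by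
  have hmod : (1:ℤ) % (N:ℤ) = 1 := Int.emod_eq_of_lt (by omega) (by omega)
  have e1 : talpha α N (1 - 1) = α 0 / Real.sqrt 2 := by
    rw [show (1:ℤ) - 1 = 0 by ring, talpha_div (Or.inl (Int.zero_emod _))]
  have e2 : talpha α N 1 = α 1 := talpha_id (by rw [hmod]; omega)
  have e3 : tbeta β N 1 = β 1 := tbeta_id (by rw [hmod]; omega)
  have ha := (hα 1).ne'
  have h := hu.ne'
  simp only [frakB, D1]
  rw [e1, e2, e3, show (1:ℤ) - 1 = 0 by ring]
  ext i j
  fin_cases i <;> fin_cases j <;>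
    simp [Matrix.mul_apply, Fin.sum_univ_two, Matrix.vecMul, Matrix.vecHead, Matrix.vecTail,
      dotProduct] <;> field_simp <;> ring_nf <;> simp [Real.sq_sqrt] <;> try ring

/-- `B̃_1 = E2 ⬝ B_1 ⬝ D1` when `N = 2`. -/
lemma tB_one2 (hα : ∀ n, 0 < α n) (h2 : N = 2) :
    frakB (talpha α N) (tbeta β N) 1 x = E2 * (frakB α β 1 x * D1) := by
  subst h2
  have e1 : talpha α 2 (1 - 1) = α 0 / Real.sqrt 2 := by
    rw [show (1:ℤ) - 1 = 0 by ring, talpha_div (Or.inl (Int.zero_emod _))]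
  have e2 : talpha α 2 1 = α 1 / Real.sqrt 2 := talpha_div (by norm_num)
  have e3 : tbeta β 2 1 = β 1 := tbeta_id (by norm_num)
  have ha := (hα 1).ne'
  have ha0 := (hα 0).ne'
  have h := hu.ne'
  simp only [frakB, D1, E2]
  rw [e1, e2, e3, show (1:ℤ) - 1 = 0 by ring]
  ext i j
  fin_cases i <;> fin_cases j <;>
    simp [Matrix.mul_apply, Fin.sum_univ_two, Matrix.vecMul, Matrix.vecHead, Matrix.vecTail,
      dotProduct] <;> field_simp <;> ring_nf <;> simp [Real.sq_sqrt] <;> try ring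

/-- `B̃_{N-1} = E2 ⬝ B_{N-1}` (needs `N ≥ 3`). -/
lemma tB_top (hN : 3 ≤ N) (hα : ∀ n, 0 < α n) :
    frakB (talpha α N) (tbeta β N) ((N:ℤ) - 1) x = E2 * frakB α β ((N:ℤ) - 1) x := by
  have hm2 : ((N:ℤ) - 1 - 1) % (N:ℤ) = (N:ℤ) - 2 := by
    rw [show ((N:ℤ) - 1 - 1) = (N:ℤ) - 2 by ring]
    exact Int.emod_eq_of_lt (by omega) (by omega)
  have hN1 : ((N:ℤ) - 1) % (N:ℤ) = (N:ℤ) - 1 := Int.emod_eq_of_lt (by omega) (by omega)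
  have e1 : talpha α N ((N:ℤ) - 1 - 1) = α ((N:ℤ) - 1 - 1) := talpha_id (by rw [hm2]; omega)
  have e2 : talpha α N ((N:ℤ) - 1) = α ((N:ℤ) - 1) / Real.sqrt 2 := talpha_div (Or.inr hN1)
  have e3 : tbeta β N ((N:ℤ) - 1) = β ((N:ℤ) - 1) := tbeta_id (by rw [hN1]; omega)
  have ha := (hα ((N:ℤ) - 1)).ne'
  have h := hu.ne'
  simp only [frakB, E2]
  rw [e1, e2, e3]
  ext i j
  fin_cases i <;> fin_cases j <;>
    simp [Matrix.mul_apply, Fin.sum_univ_two, Matrix.vecMul, Matrix.vecHead, Matrix.vecTail,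
      dotProduct] <;> field_simp <;> ring_nf <;> simp [Real.sq_sqrt] <;> try ring

/-- the middle chunk: `B̃_{N-1} ⋯ B̃_1 = E2 ⬝ (B_{N-1} ⋯ B_1 ⬝ D1)`. -/
lemma chunkM (hN : 2 ≤ N) (hα : ∀ n, 0 < α n) (hαper : ∀ n : ℤ, α (n + N) = α n) :
    prodDZ (fun j => frakB (talpha α N) (tbeta β N) j x) 1 (N - 1)
      = E2 * (prodDZ (fun j => frakB α β j x) 1 (N - 1) * D1) := by
  rcases eq_or_lt_of_le hN with h2 | h3
  · subst h2
    simp only [show (2:ℕ) - 1 = 1 from rfl, prodDZ_one]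
    exact tB_one2 hα rfl
  · have h3 : 3 ≤ N := h3
    have e : N - 1 = 1 + (N - 3) + 1 := by omega
    rw [e]
    simp only [prodDZ_add, prodDZ_one]
    rw [show (1:ℤ) + ((1 + (N - 3) : ℕ) : ℤ) = (N:ℤ) - 1 by omega,
      show (1:ℤ) + ((1:ℕ) : ℤ) = 2 by omega]
    rw [tB_top h3 hα, tB_one h3 hα,
      run_generic (n0 := 2) (len := N - 3) (fun k hk => by
        have : ((2:ℤ) + k) % (N:ℤ) = 2 + k := Int.emod_eq_of_lt (by omega) (by omega)
        omega)]
    simp only [Matrix.mul_assoc]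

end Main

end BlendAux

open BlendAux in
/-- Claim 6 of the paper. Identities relating the matrices `𝒳_i` of an
`N`-periodic blend to the transfer matrices `𝔛̃` of the modified periodic sequences. -/
theorem blend_matrices_eq_modified_transfer
    (N : ℕ) (hN : 2 ≤ N)
    (α β : ℤ → ℝ) (hα : ∀ n, 0 < α n)
    (hαper : ∀ n : ℤ, α (n + N) = α n) (hβper : ∀ n : ℤ, β (n + N) = β n) :
    ∀ x : ℝ,
      calX α β N 1 x =
        -(!![1 / Real.sqrt 2, 0; 0, 1] * tfrakX α β N 1 x * !![Real.sqrt 2, 0; 0, 1]) ∧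
      (∀ j : ℕ, 2 ≤ j → j ≤ N - 1 → calX α β N j x = -(tfrakX α β N (j : ℤ) x)) ∧
      calX α β N N x =
        -(!![Real.sqrt 2, 0; 0, 1] * tfrakX α β N 0 x * !![1 / Real.sqrt 2, 0; 0, 1]) := by
  intro x
  refine ⟨?_, ?_, ?_⟩
  · -- `i = 1`
    simp only [calX, tfrakX, Nat.sub_self, Nat.cast_one, prodDZ, one_mul]
    rw [show prodDZ (fun j => frakB (talpha α N) (tbeta β N) j x) 1 N
          = prodDZ (fun j => frakB (talpha α N) (tbeta β N) j x) 1 ((N - 1) + 1) by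
        rw [show N - 1 + 1 = N by omega]]
    simp only [prodDZ_add, prodDZ_one]
    rw [show (1:ℤ) + ((N - 1 : ℕ) : ℤ) = (N:ℤ) by omega]
    rw [tB_N hN hα hαper hβper, chunkM hN hα hαper]
    rw [show (!![1 / Real.sqrt 2, 0; 0, 1] : Mat2) = D1 from rfl,
        show (!![Real.sqrt 2, 0; 0, 1] : Mat2) = D2 from rfl]
    simp only [Matrix.mul_assoc]
    rw [sand2, D1D2]
    simp only [mul_one, mul_neg, neg_mul, neg_neg]
  · -- `2 ≤ j ≤ N - 1`
    intro j hj2 hjN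
    have h3 : 3 ≤ N := by omega
    simp only [calX, tfrakX]
    rw [show prodDZ (fun i => frakB (talpha α N) (tbeta β N) i x) (j:ℤ) N
          = prodDZ (fun i => frakB (talpha α N) (tbeta β N) i x) (j:ℤ)
              (N - 1 - j + 1 + 1 + 1 + (j - 2)) by
        rw [show N - 1 - j + 1 + 1 + 1 + (j - 2) = N by omega]]
    rw [show j - 1 = 1 + (j - 2) by omega, show N - j = (N - 1 - j) + 1 by omega]
    simp only [prodDZ_add, prodDZ_one]
    rw [show (j:ℤ) + ((N - 1 - j + 1 + 1 + 1 : ℕ) : ℤ) = 2 + (N:ℤ) by omega,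
        show (j:ℤ) + ((N - 1 - j + 1 + 1 : ℕ) : ℤ) = (N:ℤ) + 1 by omega,
        show (j:ℤ) + ((N - 1 - j + 1 : ℕ) : ℤ) = (N:ℤ) by omega,
        show (j:ℤ) + ((N - 1 - j : ℕ) : ℤ) = (N:ℤ) - 1 by omega,
        show (1:ℤ) + ((1:ℕ) : ℤ) = 2 by omega]
    rw [tB_N1 h3 hα hαper hβper, tB_N hN hα hαper hβper, tB_top h3 hα]
    rw [run_generic (n0 := 2 + (N:ℤ)) (len := j - 2) (fun k hk => by
          have e : ((2:ℤ) + N + k) % N = 2 + k := by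
            rw [show (2:ℤ) + N + k = (2 + k) + N by ring, add_N_emod]
            exact Int.emod_eq_of_lt (by omega) (by omega)
          omega),
        run_generic (n0 := (j:ℤ)) (len := N - 1 - j) (fun k hk => by
          have e : ((j:ℤ) + k) % N = j + k := Int.emod_eq_of_lt (by omega) (by omega)
          omega),
        prodDZ_shift (B_per hαper hβper) 2 (j - 2)]
    simp only [Matrix.mul_assoc]
    rw [sand2]
    simp only [mul_neg, neg_mul, neg_neg]
  · -- `i = N`
    simp only [calX, tfrakX, Nat.sub_self, prodDZ, mul_one]
    rw [show prodDZ (fun j => frakB (talpha α N) (tbeta β N) j x) 0 N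
          = prodDZ (fun j => frakB (talpha α N) (tbeta β N) j x) 0 (1 + (N - 1)) by
        rw [show 1 + (N - 1) = N by omega]]
    simp only [prodDZ_add, prodDZ_one]
    rw [show (0:ℤ) + ((1:ℕ) : ℤ) = 1 by omega]
    rw [tB_zero hN hα hαper, chunkM hN hα hαper]
    rw [show (!![1 / Real.sqrt 2, 0; 0, 1] : Mat2) = D1 from rfl,
        show (!![Real.sqrt 2, 0; 0, 1] : Mat2) = D2 from rfl]
    simp only [Matrix.mul_assoc]
    rw [sand3, D2D1]
    simp only [mul_one, mul_neg, neg_mul, neg_neg]
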